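/- Let I ⊆ {1, …, N} with |I| = N − r be such that the vectors a_i for i ∉ I are linearly independent over ℝ, and let α ∈ ℂ^r. Consider the set G of all γ ∈ ℂ^N such that ∑_{j=1}^N γ_j a_j = α (identifying each a_j with its image in ℂ^r) and γ_i ∈ ℤ for all i ∈ I. Then G is nonempty, and the number of equivalence classes of G under translation by elements of L is exactly |det M|, where M is the r × r matrix whose columns are the vectors a_i with i ∉ I. -/

import Mathlib

open scoped BigOperators

/-- The lattice of integer relations among the vectors `a j`. -/
def latticeL {r N : ℕ} (a : Fin N → Fin r → ℤ) : Set (Fin N → ℤ) :=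
  {l | ∑ j, l j • a j = 0}

/-- The set `G` of parameters `γ ∈ ℂ^N` with `∑ γ_j a_j = α` and `γ_i ∈ ℤ` for `i ∈ I`. -/
def paramSet {r N : ℕ} (a : Fin N → Fin r → ℤ) (I : Finset (Fin N)) (α : Fin r → ℂ) :
    Set (Fin N → ℂ) :=
  {γ | (∑ j, γ j • fun k => ((a j k : ℤ) : ℂ)) = α ∧ ∀ i ∈ I, ∃ z : ℤ, γ i = (z : ℂ)}

open Matrix

open Matrix in
lemma index_range_mulVecLin {r : ℕ} (M : Matrix (Fin r) (Fin r) ℤ) (hM : M.det ≠ 0) :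
    (LinearMap.range M.mulVecLin).toAddSubgroup.index = M.det.natAbs := by
  classical
  have inj : Function.Injective M.mulVecLin := by
    intro v w hvw
    have h0 : M *ᵥ (v - w) = 0 := by
      rw [Matrix.mulVec_sub]
      simpa [Matrix.mulVecLin_apply, sub_eq_zero] using hvw
    exact sub_eq_zero.mp (Matrix.eq_zero_of_mulVec_eq_zero hM h0)
  set P : Submodule ℤ (Fin r → ℤ) := LinearMap.range M.mulVecLin with hP
  let E := LinearEquiv.ofInjective M.mulVecLin inj
  obtain ⟨n, snf⟩ := P.smithNormalForm (Pi.basisFun ℤ (Fin r))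
  have hn : n = r := by
    have h1 : Module.finrank ℤ P = n := by
      simpa using Module.finrank_eq_card_basis snf.bN
    have h2 : Module.finrank ℤ P = r := by
      rw [← E.finrank_eq]
      simp [Module.finrank_pi]
    rw [← h1, h2]
  subst hn
  have hbij : Function.Bijective snf.f :=
    Finite.injective_iff_bijective.mp snf.f.injective
  let eqv : Fin n ≃ Fin n := Equiv.ofBijective snf.f hbij
  let ab : Module.Basis (Fin n) ℤ P := snf.bN.reindex eqv
  have hab : ∀ i, ((ab i : P) : Fin n → ℤ) = snf.a (eqv.symm i) • snf.bM i := by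
    intro i
    have hfi : snf.f (eqv.symm i) = i := eqv.apply_symm_apply i
    simp only [ab, Module.Basis.coe_reindex, Function.comp_apply, snf.snf, hfi]
  let F := (P.subtype).comp (snf.bM.equiv ab (Equiv.refl _)).toLinearMap
  have hF : ∀ i, F (snf.bM i) = snf.a (eqv.symm i) • snf.bM i := by
    intro i
    have h1 : (snf.bM.equiv ab (Equiv.refl _)) (snf.bM i) = ab i := by
      rw [Module.Basis.equiv_apply, Equiv.refl_apply]
    show P.subtype ((snf.bM.equiv ab (Equiv.refl _)) (snf.bM i)) = _
    rw [h1]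
    exact hab i
  have hdetF : (LinearMap.det F).natAbs = (∏ i, snf.a i).natAbs := by
    rw [← LinearMap.det_toMatrix snf.bM]
    have hmat : LinearMap.toMatrix snf.bM snf.bM F = Matrix.diagonal (snf.a ∘ eqv.symm) := by
      ext i j
      rw [LinearMap.toMatrix_apply, hF, _root_.map_smul, Module.Basis.repr_self, Finsupp.smul_single,
        smul_eq_mul, mul_one]
      by_cases h : i = j
      · rw [h, Matrix.diagonal_apply_eq, Finsupp.single_eq_same]; rfl
      · rw [Matrix.diagonal_apply_ne _ h, Finsupp.single_eq_of_ne h]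
    rw [hmat, Matrix.det_diagonal]
    congr 1
    exact Equiv.prod_comp eqv.symm snf.a
  have hME : P.subtype ∘ₗ E.toLinearMap = M.mulVecLin := by
    ext v
    simp [E, LinearEquiv.ofInjective_apply]
  have hassoc : Associated (LinearMap.det (P.subtype ∘ₗ E.toLinearMap)) (LinearMap.det F) :=
    LinearMap.associated_det_comp_equiv _ _ _
  have hdetM : M.det.natAbs = (∏ i, snf.a i).natAbs := by
    rw [← hdetF]
    have hd : LinearMap.det (P.subtype ∘ₗ E.toLinearMap) = M.det := by
      rw [hME]
      have hmv : M.mulVecLin = Matrix.toLin' M := by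
        ext v
        simp [Matrix.toLin'_apply]
      rw [hmv, LinearMap.det_toLin']
    rw [← hd]
    exact Int.natAbs_eq_iff_associated.mpr hassoc
  rw [snf.toAddSubgroup_index_eq_pow_mul_prod]
  simp only [Fintype.card_fin, Nat.sub_self, pow_zero, one_mul]
  rw [hdetM, show (∏ i, snf.a i).natAbs = ∏ i, (snf.a i).natAbs from
    map_prod Int.natAbsHom _ _]
  refine Finset.prod_congr rfl fun i _ => ?_
  rw [Ideal.span_singleton_toAddSubgroup_eq_zmultiples, Int.index_zmultiples]

section Aux
variable {r N : ℕ} (a : Fin N → Fin r → ℤ) (I : Finset (Fin N)) (e : Fin r ≃ {i : Fin N // i ∉ I})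

def auxM : Matrix (Fin r) (Fin r) ℤ := Matrix.of fun k j : Fin r => a (e j).1 k

noncomputable def auxMc : Matrix (Fin r) (Fin r) ℂ := (auxM a I e).map fun z : ℤ => (z : ℂ)

def auxPhi (x : Fin N → ℤ) : Fin r → ℤ := ∑ i ∈ I, x i • a i

noncomputable def auxGam (α : Fin r → ℂ) (x : Fin N → ℤ) : Fin N → ℂ :=
  fun j => if h : j ∈ I then (x j : ℂ)
    else ((auxMc a I e)⁻¹ *ᵥ (α - fun k => ((auxPhi a I x k : ℤ) : ℂ))) (e.symm ⟨j, h⟩)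

lemma aux_split_int (c : Fin N → ℤ) :
    ∑ j, c j • a j = auxPhi a I c + (auxM a I e) *ᵥ (fun k => c (e k).1) := by
  classical
  rw [← Finset.sum_add_sum_compl I (fun j => c j • a j)]
  congr 1
  rw [Finset.sum_subtype (p := fun i : Fin N => i ∉ I) Iᶜ (by simp) (fun j => c j • a j),
    ← Equiv.sum_comp e (fun s : {i : Fin N // i ∉ I} => c s.1 • a s.1)]
  funext l
  rw [Finset.sum_apply, Matrix.mulVec]
  simp only [dotProduct, auxM, Matrix.of_apply, Pi.smul_apply, smul_eq_mul]
  exact Finset.sum_congr rfl fun k _ => mul_comm _ _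

lemma aux_split_c (γ : Fin N → ℂ) :
    ∑ j, γ j • (fun k => ((a j k : ℤ) : ℂ)) =
      (∑ i ∈ I, γ i • fun k => ((a i k : ℤ) : ℂ)) +
        (auxMc a I e) *ᵥ (fun k => γ (e k).1) := by
  classical
  rw [← Finset.sum_add_sum_compl I (fun j => γ j • (fun k => ((a j k : ℤ) : ℂ)))]
  congr 1
  rw [Finset.sum_subtype (p := fun i : Fin N => i ∉ I) Iᶜ (by simp)
      (fun j => γ j • (fun k => ((a j k : ℤ) : ℂ))),
    ← Equiv.sum_comp e (fun s : {i : Fin N // i ∉ I} => γ s.1 • (fun k => ((a s.1 k : ℤ) : ℂ)))]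
  funext l
  rw [Finset.sum_apply, Matrix.mulVec]
  simp only [dotProduct, auxMc, auxM, Matrix.map_apply, Matrix.of_apply, Pi.smul_apply,
    smul_eq_mul]
  exact Finset.sum_congr rfl fun k _ => mul_comm _ _

lemma aux_phi_cast (x : Fin N → ℤ) :
    (fun k => ((auxPhi a I x k : ℤ) : ℂ)) = ∑ i ∈ I, (x i : ℂ) • (fun k => ((a i k : ℤ) : ℂ)) := by
  funext k
  rw [Finset.sum_apply]
  simp only [auxPhi, Finset.sum_apply, Pi.smul_apply, smul_eq_mul]
  push_cast
  rfl

lemma aux_mulVec_cast (M : Matrix (Fin r) (Fin r) ℤ) (y : Fin r → ℤ) :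
    (fun k => (((M *ᵥ y) k : ℤ) : ℂ)) = (M.map fun z : ℤ => (z : ℂ)) *ᵥ (fun j => (y j : ℂ)) := by
  funext k
  exact RingHom.map_mulVec (Int.castRingHom ℂ) M y k

variable (α : Fin r → ℂ)

lemma aux_gam_mem (hdet : IsUnit (auxMc a I e).det) (x : Fin N → ℤ) :
    auxGam a I e α x ∈ paramSet a I α := by
  constructor
  · rw [aux_split_c a I e]
    have h1 : (∑ i ∈ I, auxGam a I e α x i • fun k => ((a i k : ℤ) : ℂ)) =
        (fun k => ((auxPhi a I x k : ℤ) : ℂ)) := by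
      rw [aux_phi_cast]
      refine Finset.sum_congr rfl fun i hi => ?_
      rw [auxGam, dif_pos hi]
    have h2 : (fun k => auxGam a I e α x (e k).1) =
        (auxMc a I e)⁻¹ *ᵥ (α - fun k => ((auxPhi a I x k : ℤ) : ℂ)) := by
      funext k
      rw [auxGam, dif_neg (e k).2]
      congr
      exact congrArg e.symm (Subtype.ext rfl) |>.trans (e.symm_apply_apply k)
    rw [h1, h2, Matrix.mulVec_mulVec, Matrix.mul_nonsing_inv _ hdet, Matrix.one_mulVec]
    abel
  · intro i hi
    exact ⟨x i, by rw [auxGam, dif_pos hi]⟩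

lemma aux_param_eq_gam (hdet : IsUnit (auxMc a I e).det) (γ : Fin N → ℂ)
    (hγ : γ ∈ paramSet a I α) : ∃ x : Fin N → ℤ, γ = auxGam a I e α x := by
  classical
  obtain ⟨h1, h2⟩ := hγ
  choose z hz using h2
  refine ⟨fun i => if h : i ∈ I then z i h else 0, ?_⟩
  set x : Fin N → ℤ := fun i => if h : i ∈ I then z i h else 0 with hx
  have hxI : ∀ i (hi : i ∈ I), γ i = (x i : ℂ) := by
    intro i hi
    rw [hx]
    simp only [dif_pos hi]
    exact hz i hi
  have hphi : (∑ i ∈ I, γ i • fun k => ((a i k : ℤ) : ℂ)) =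
      (fun k => ((auxPhi a I x k : ℤ) : ℂ)) := by
    rw [aux_phi_cast]
    exact Finset.sum_congr rfl fun i hi => by rw [hxI i hi]
  rw [aux_split_c a I e, hphi] at h1
  have hw : (fun k => γ (e k).1) =
      (auxMc a I e)⁻¹ *ᵥ (α - fun k => ((auxPhi a I x k : ℤ) : ℂ)) := by
    have : (auxMc a I e) *ᵥ (fun k => γ (e k).1) =
        α - fun k => ((auxPhi a I x k : ℤ) : ℂ) := by
      rw [← h1]; abel
    rw [← this, Matrix.mulVec_mulVec, Matrix.nonsing_inv_mul _ hdet, Matrix.one_mulVec]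
  funext j
  by_cases h : j ∈ I
  · rw [auxGam, dif_pos h]
    exact hxI j h
  · rw [auxGam, dif_neg h]
    have h3 := congrFun hw (e.symm ⟨j, h⟩)
    have h4 : (e (e.symm ⟨j, h⟩)).1 = j := by rw [e.apply_symm_apply]
    rw [h4] at h3
    exact h3
end Aux

variable {r N : ℕ} (a : Fin N → Fin r → ℤ) (I : Finset (Fin N)) (e : Fin r ≃ {i : Fin N // i ∉ I})

abbrev auxQ := (Fin r → ℤ) ⧸ (LinearMap.range (auxM a I e).mulVecLin).toAddSubgroup

def auxPsi (x : Fin N → ℤ) : auxQ a I e := QuotientAddGroup.mk (auxPhi a I x)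

lemma aux_psi_congr {x x' : Fin N → ℤ} (h : ∀ i ∈ I, x i = x' i) :
    auxPsi a I e x = auxPsi a I e x' := by
  unfold auxPsi
  congr 1
  exact Finset.sum_congr rfl fun i hi => by rw [h i hi]

lemma aux_psi_eq_iff (x x' : Fin N → ℤ) :
    auxPsi a I e x = auxPsi a I e x' ↔
      auxPhi a I x - auxPhi a I x' ∈ LinearMap.range (auxM a I e).mulVecLin := by
  rw [auxPsi, auxPsi, QuotientAddGroup.eq_iff_sub_mem]
  rfl

variable (α : Fin r → ℂ)

lemma aux_claimA (hdet : IsUnit (auxMc a I e).det) (x x' : Fin N → ℤ) :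
    (∃ l ∈ latticeL a, auxGam a I e α x = auxGam a I e α x' + fun j => ((l j : ℤ) : ℂ)) ↔
      auxPsi a I e x = auxPsi a I e x' := by
  constructor
  · rintro ⟨l, hl, heq⟩
    have hlI : ∀ i ∈ I, x i = x' i + l i := by
      intro i hi
      have := congrFun heq i
      simp only [auxGam, Pi.add_apply, dif_pos hi] at this
      exact_mod_cast this
    rw [aux_psi_eq_iff]
    have hsplit := aux_split_int a I e l
    rw [show (∑ j, l j • a j) = 0 from hl] at hsplit
    have hphi : auxPhi a I x - auxPhi a I x' = auxPhi a I l := by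
      unfold auxPhi
      rw [← Finset.sum_sub_distrib]
      refine Finset.sum_congr rfl fun i hi => ?_
      rw [hlI i hi]
      -- cast
      rw [add_smul]
      abel
    rw [hphi]
    have : auxPhi a I l = -((auxM a I e) *ᵥ fun k => l (e k).1) := by
      rw [eq_neg_iff_add_eq_zero, ← hsplit]
    rw [this]
    exact neg_mem ⟨fun k => l (e k).1, rfl⟩
  · intro hpsi
    rw [aux_psi_eq_iff] at hpsi
    obtain ⟨y, hy⟩ := hpsi
    classical
    refine ⟨fun j => if h : j ∈ I then x j - x' j else -y (e.symm ⟨j, h⟩), ?_, ?_⟩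
    · show (∑ j, _ • a j) = 0
      rw [aux_split_int a I e]
      have h1 : auxPhi a I (fun j => if h : j ∈ I then x j - x' j else -y (e.symm ⟨j, h⟩)) =
          auxPhi a I x - auxPhi a I x' := by
        unfold auxPhi
        rw [← Finset.sum_sub_distrib]
        refine Finset.sum_congr rfl fun i hi => ?_
        simp only [dif_pos hi, sub_smul]
      have h2 : (fun k => (if h : (e k).1 ∈ I then x (e k).1 - x' (e k).1
          else -y (e.symm ⟨(e k).1, h⟩)) : Fin r → ℤ) = -y := by
        funext k
        rw [dif_neg (e k).2]
        have : e.symm ⟨(e k).1, (e k).2⟩ = k := by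
          rw [show (⟨(e k).1, (e k).2⟩ : {i : Fin N // i ∉ I}) = e k from Subtype.ext rfl,
            e.symm_apply_apply]
        rw [this]
        rfl
      rw [h1, h2]
      have : (auxM a I e).mulVecLin y = auxPhi a I x - auxPhi a I x' := hy
      rw [Matrix.mulVec_neg, ← Matrix.mulVecLin_apply, this]
      abel
    · funext j
      by_cases h : j ∈ I
      · simp only [auxGam, dif_pos h, Pi.add_apply]
        push_cast
        ring
      · simp only [auxGam, dif_neg h, Pi.add_apply]
        have hyc : (fun k => ((auxPhi a I x k : ℤ) : ℂ)) =
            (fun k => ((auxPhi a I x' k : ℤ) : ℂ)) + (auxMc a I e) *ᵥ (fun j => (y j : ℂ)) := by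
          rw [auxMc, ← aux_mulVec_cast]
          funext k
          have := congrFun hy k
          rw [Matrix.mulVecLin_apply] at this
          simp only [Pi.add_apply, Pi.sub_apply] at this ⊢
          rw [show ((auxM a I e) *ᵥ y) k = auxPhi a I x k - auxPhi a I x' k from this]
          push_cast
          ring
        have hvec : (auxMc a I e)⁻¹ *ᵥ (α - fun k => ((auxPhi a I x k : ℤ) : ℂ)) =
            ((auxMc a I e)⁻¹ *ᵥ (α - fun k => ((auxPhi a I x' k : ℤ) : ℂ))) -
              (fun j => (y j : ℂ)) := by
          rw [hyc]
          have harg : (α - ((fun k => ((auxPhi a I x' k : ℤ) : ℂ)) +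
              (auxMc a I e) *ᵥ (fun j => (y j : ℂ)))) =
              (α - fun k => ((auxPhi a I x' k : ℤ) : ℂ)) -
                (auxMc a I e) *ᵥ (fun j => (y j : ℂ)) := by abel
          rw [harg, Matrix.mulVec_sub, Matrix.mulVec_mulVec,
            Matrix.nonsing_inv_mul _ hdet, Matrix.one_mulVec]
        rw [hvec]
        simp only [Pi.sub_apply]
        push_cast
        ring

lemma aux_psi_surj (hspan : Submodule.span ℤ (Set.range a) = ⊤) :
    Function.Surjective (auxPsi a I e) := by
  intro q
  obtain ⟨v, rfl⟩ := QuotientAddGroup.mk_surjective q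
  have hv : v ∈ Submodule.span ℤ (Set.range a) := by rw [hspan]; trivial
  obtain ⟨c, hc⟩ := (Submodule.mem_span_range_iff_exists_fun ℤ).mp hv
  refine ⟨c, ?_⟩
  show QuotientAddGroup.mk (auxPhi a I c) = QuotientAddGroup.mk v
  rw [QuotientAddGroup.eq_iff_sub_mem]
  have := aux_split_int a I e c
  rw [hc] at this
  have : auxPhi a I c - v = -((auxM a I e) *ᵥ fun k => c (e k).1) := by
    rw [this]; abel
  rw [this]
  exact neg_mem (Submodule.mem_toAddSubgroup _ |>.mpr ⟨fun k => c (e k).1, rfl⟩)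


/-- `G` is nonempty, and the number of its classes modulo translation by `L` is `|det M|`. -/
theorem stmt_3 (r N : ℕ) (hr : 1 ≤ r) (hrN : r < N)
    (a : Fin N → Fin r → ℤ)
    (hspan : Submodule.span ℤ (Set.range a) = ⊤)
    (h : (Fin r → ℤ) →ₗ[ℤ] ℤ) (hh : ∀ j, h (a j) = 1)
    (I : Finset (Fin N)) (hI : I.card = N - r)
    (hind : LinearIndependent ℝ (fun i : {i : Fin N // i ∉ I} => fun k => (a i.1 k : ℝ)))
    (e : Fin r ≃ {i : Fin N // i ∉ I}) (α : Fin r → ℂ) :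
    (paramSet a I α).Nonempty ∧
      ∃ S : Finset (Fin N → ℂ), ↑S ⊆ paramSet a I α ∧
        S.card = (Matrix.det (Matrix.of fun k j : Fin r => a (e j).1 k)).natAbs ∧
        ∀ γ ∈ paramSet a I α, ∃! γ₀, γ₀ ∈ S ∧
          ∃ l ∈ latticeL a, γ = γ₀ + fun j => ((l j : ℤ) : ℂ) := by
  classical
  have hind' : LinearIndependent ℝ
      (fun j : Fin r => ((auxM a I e).map fun z : ℤ => (z : ℝ))ᵀ j) :=
    hind.comp e e.injective
  have hunit : IsUnit ((auxM a I e).map fun z : ℤ => (z : ℝ)) :=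
    Matrix.linearIndependent_cols_iff_isUnit.mp hind'
  have hdetR : ((auxM a I e).map fun z : ℤ => (z : ℝ)).det ≠ 0 :=
    ((Matrix.isUnit_iff_isUnit_det _).mp hunit).ne_zero
  have hdetZ : (auxM a I e).det ≠ 0 := by
    intro h0
    apply hdetR
    rw [show ((auxM a I e).map fun z : ℤ => (z : ℝ)) =
      (Int.castRingHom ℝ).mapMatrix (auxM a I e) from rfl, ← RingHom.map_det, h0]
    simp
  have hdetc : IsUnit (auxMc a I e).det := by
    rw [auxMc, show ((auxM a I e).map fun z : ℤ => (z : ℂ)) =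
      (Int.castRingHom ℂ).mapMatrix (auxM a I e) from rfl, ← RingHom.map_det]
    simp only [isUnit_iff_ne_zero, ne_eq, eq_intCast, Int.cast_eq_zero]
    exact hdetZ
  have hcard : Nat.card (auxQ a I e) = (auxM a I e).det.natAbs :=
    index_range_mulVecLin (auxM a I e) hdetZ
  have hfin : Finite (auxQ a I e) := by
    have hne : Nat.card (auxQ a I e) ≠ 0 := by
      rw [hcard]
      simpa using hdetZ
    exact (Nat.card_ne_zero.mp hne).2
  haveI := hfin
  haveI : Fintype (auxQ a I e) := Fintype.ofFinite _
  obtain ⟨rep, hrep⟩ : ∃ rep : auxQ a I e → (Fin N → ℤ), ∀ q, auxPsi a I e (rep q) = q := by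
    choose rep hrep using aux_psi_surj a I e hspan
    exact ⟨rep, hrep⟩
  set S : Finset (Fin N → ℂ) := Finset.image (fun q => auxGam a I e α (rep q)) Finset.univ
    with hS
  have hgr_inj : Function.Injective (fun q => auxGam a I e α (rep q)) := by
    intro q q' hqq
    have hI' : ∀ i ∈ I, rep q i = rep q' i := by
      intro i hi
      have hfun := congrFun hqq i
      simp only [auxGam, dif_pos hi] at hfun
      exact_mod_cast hfun
    rw [← hrep q, ← hrep q']
    exact aux_psi_congr a I e hI'
  refine ⟨⟨auxGam a I e α 0, aux_gam_mem a I e α hdetc 0⟩, S, ?_, ?_, ?_⟩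
  · intro γ hγ
    obtain ⟨q, -, rfl⟩ := Finset.mem_image.mp hγ
    exact aux_gam_mem a I e α hdetc (rep q)
  · rw [hS, Finset.card_image_of_injective _ hgr_inj, Finset.card_univ,
      ← Nat.card_eq_fintype_card, hcard]
    rfl
  · intro γ hγ
    obtain ⟨x, rfl⟩ := aux_param_eq_gam a I e α hdetc γ hγ
    refine ⟨auxGam a I e α (rep (auxPsi a I e x)),
      ⟨Finset.mem_image.mpr ⟨_, Finset.mem_univ _, rfl⟩,
        (aux_claimA a I e α hdetc x (rep (auxPsi a I e x))).mpr (hrep _).symm⟩, ?_⟩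
    rintro γ₀' ⟨hmem, l', hl', heq'⟩
    obtain ⟨q', -, rfl⟩ := Finset.mem_image.mp hmem
    have hq' : auxPsi a I e x = auxPsi a I e (rep q') :=
      (aux_claimA a I e α hdetc x (rep q')).mp ⟨l', hl', heq'⟩
    rw [hrep q'] at hq'
    rw [hq']
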